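/- Define the sequence r_n by ∑_{n≥1} r_n z^{rn}/(rn)! = -log(∑_{n≥0} (-1)^n z^{rn}/(rn)!). Then each r_n is an integer. -/

import Mathlib

open PowerSeries

open Finset in
theorem sum_mult (r n : ℕ) (hr : 0 < r) (F : ℕ → ℚ)
    (h0 : ∀ i < r*n, ¬ r ∣ i → F i = 0) :
    ∑ i ∈ Finset.range (r*n), F i = ∑ j ∈ Finset.range n, F (r*j) := by
  have hsub : ((Finset.range n).image (fun j => r*j)) ⊆ Finset.range (r*n) := by
    intro a ha
    simp only [Finset.mem_image, Finset.mem_range] at ha ⊢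
    obtain ⟨j, hj, rfl⟩ := ha
    have := Nat.mul_le_mul_left r (Nat.succ_le_of_lt hj)
    rw [Nat.mul_succ] at this
    omega
  rw [← Finset.sum_subset hsub]
  · rw [Finset.sum_image]
    intro x _ y _ h
    exact Nat.eq_of_mul_eq_mul_left hr h
  · intro a ha hna
    refine h0 a (Finset.mem_range.mp ha) ?_
    rintro ⟨c, rfl⟩
    refine hna ?_
    simp only [Finset.mem_image, Finset.mem_range]
    exact ⟨c, Nat.lt_of_mul_lt_mul_left (Finset.mem_range.mp ha), rfl⟩


/-- Fix `r ≥ 1`. If `∑_{n≥1} r_n z^{rn}/(rn)! = -log (∑_{n≥0} (-1)^n z^{rn}/(rn)!)` as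
formal power series over `ℚ` (the logarithm characterized by: the left side `L` has
constant term `0` and `g * L' = -g'` where `g` is the series being logarithmed), then
each `r_n` is an integer. -/
theorem stmt_4 (r : ℕ) (hr : 1 ≤ r) (rseq : ℕ → ℚ)
    (L g : PowerSeries ℚ)
    (hL : L = PowerSeries.mk fun k =>
      if r ∣ k ∧ k ≠ 0 then rseq (k / r) / (Nat.factorial k : ℚ) else 0)
    (hg : g = PowerSeries.mk fun k =>
      if r ∣ k then (-1 : ℚ) ^ (k / r) / (Nat.factorial k : ℚ) else 0)
    (hlog : g * L.derivativeFun = -g.derivativeFun) :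
    ∀ n : ℕ, 1 ≤ n → ∃ m : ℤ, rseq n = (m : ℚ) := by
  have hrpos : 0 < r := hr
  subst hL hg
  have key : ∀ n : ℕ, 1 ≤ n →
      ∑ j ∈ Finset.range n,
        (-1:ℚ)^j * ((r*n-1).choose (r*j) : ℚ) * rseq (n - j) = (-1:ℚ)^(n+1) := by
    intro n hn
    have hrn : 1 ≤ r * n := Nat.one_le_iff_ne_zero.mpr (by positivity)
    have hE := congrArg (PowerSeries.coeff (R := ℚ) (r*n-1)) hlog
    simp only [show ∀ f : ℚ⟦X⟧, f.derivativeFun = d⁄dX ℚ f from fun _ => rfl] at hE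
    rw [PowerSeries.coeff_mul, Finset.Nat.sum_antidiagonal_eq_sum_range_succ_mk,
      map_neg, PowerSeries.coeff_derivativeFun] at hE
    simp only [PowerSeries.coeff_derivativeFun, PowerSeries.coeff_mk] at hE
    simp only [Nat.succ_eq_add_one, ← Nat.cast_add_one] at hE
    rw [show r*n - 1 + 1 = r*n from by omega] at hE
    rw [sum_mult r n hrpos _ (by intro i _ hi; simp [hi])] at hE
    have hFne : (((r*n-1).factorial : ℚ)) ≠ 0 := Nat.cast_ne_zero.mpr (Nat.factorial_ne_zero _)
    have hstep : ∀ j ∈ Finset.range n,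
        (if r ∣ r * j then (-1:ℚ) ^ (r * j / r) / ((r * j).factorial : ℚ) else 0) *
          ((if r ∣ r * n - 1 - r * j + 1 ∧ r * n - 1 - r * j + 1 ≠ 0 then
              rseq ((r * n - 1 - r * j + 1) / r) / ((r * n - 1 - r * j + 1).factorial : ℚ)
            else 0) * ((r * n - 1 - r * j + 1 : ℕ) : ℚ)) =
        ((-1:ℚ)^j * ((r*n-1).choose (r*j) : ℚ) * rseq (n - j)) * (((r*n-1).factorial : ℚ))⁻¹ := by
      intro j hj
      rw [Finset.mem_range] at hj
      have hadd : r*j + r*(n-j) = r*n := by rw [← Nat.mul_add]; congr 1; omega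
      have hlt : r*j < r*n := by
        have h1 : 1 ≤ n - j := by omega
        have := Nat.mul_le_mul_left r h1
        omega
      have h2 : r * n - 1 - r * j + 1 = r * (n - j) := by omega
      have hnj1 : 1 ≤ n - j := by omega
      have hKpos : 0 < r * (n - j) := Nat.mul_pos hrpos hnj1
      rw [h2, if_pos ⟨j, rfl⟩, if_pos ⟨⟨n - j, rfl⟩, by omega⟩,
        Nat.mul_div_cancel_left j hrpos, Nat.mul_div_cancel_left (n - j) hrpos]
      have hfacN : (r*(n-j)).factorial = (r*(n-j)) * (r*(n-j)-1).factorial := by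
        conv_lhs => rw [show r*(n-j) = (r*(n-j)-1)+1 from by omega]
        rw [Nat.factorial_succ]
        congr 2
        omega
      have hfac : ((r*(n-j)).factorial : ℚ) = (r*(n-j) : ℕ) * ((r*(n-j)-1).factorial : ℚ) := by
        exact_mod_cast hfacN
      have hC : (((r*n-1).choose (r*j) : ℚ)) * ((r*j).factorial : ℚ) * (((r*(n-j)-1).factorial : ℚ)) = ((r*n-1).factorial : ℚ) := by
        have := Nat.choose_mul_factorial_mul_factorial (show r*j ≤ r*n-1 from by omega)
        rw [show r*n-1-(r*j) = r*(n-j)-1 from by omega] at this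
        exact_mod_cast this
      rw [hfac]
      have hCne : (((r*n-1).choose (r*j) : ℚ)) ≠ 0 :=
        Nat.cast_ne_zero.mpr (Nat.choose_pos (show r*j ≤ r*n-1 from by omega)).ne'
      have hA : ((r*j).factorial : ℚ) ≠ 0 := Nat.cast_ne_zero.mpr (Nat.factorial_ne_zero _)
      have hB : (((r*(n-j)-1).factorial : ℚ)) ≠ 0 := Nat.cast_ne_zero.mpr (Nat.factorial_ne_zero _)
      have hK : ((r*(n-j) : ℕ) : ℚ) ≠ 0 := Nat.cast_ne_zero.mpr (by omega)
      rw [← hC]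
      field_simp
    rw [Finset.sum_congr rfl hstep, ← Finset.sum_mul, if_pos ⟨n, rfl⟩,
      Nat.mul_div_cancel_left n hrpos] at hE
    have hfacnN : (r*n).factorial = (r*n) * (r*n-1).factorial := by
      conv_lhs => rw [show r*n = (r*n-1)+1 from by omega]
      rw [Nat.factorial_succ]
      congr 2
      omega
    have hfacn : ((r*n).factorial : ℚ) = (r*n : ℕ) * ((r*n-1).factorial : ℚ) := by
      exact_mod_cast hfacnN
    have hKn : ((r*n : ℕ) : ℚ) ≠ 0 := Nat.cast_ne_zero.mpr (by omega)
    have hRHS : -(((-1:ℚ)) ^ n / ((r*n).factorial : ℚ) * ((r*n : ℕ) : ℚ)) = (-1:ℚ)^(n+1) * (((r*n-1).factorial : ℚ))⁻¹ := by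
      rw [hfacn]
      field_simp
      ring
    rw [hRHS] at hE
    exact mul_right_cancel₀ (inv_ne_zero hFne) hE
  have main : ∀ n : ℕ, 1 ≤ n → rseq n ∈ (Int.castRingHom ℚ).range := by
    intro n
    induction n using Nat.strong_induction_on with
    | _ n ih =>
      intro hn
      have hk := key n hn
      rw [Finset.range_eq_Ico, Finset.sum_eq_sum_Ico_succ_bot hn] at hk
      have h0 : ((-1:ℚ))^0 * (((r*n-1).choose (r*0) : ℕ) : ℚ) * rseq (n-0) = rseq n := by
        norm_num
      rw [h0] at hk
      have hrec : rseq n = (-1:ℚ)^(n+1) - ∑ j ∈ Finset.Ico 1 n,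
          (-1:ℚ)^j * ((r*n-1).choose (r*j) : ℚ) * rseq (n - j) := by linarith
      rw [hrec]
      refine sub_mem ⟨(-1)^(n+1), by simp⟩ (Subring.sum_mem _ ?_)
      intro j hj
      rw [Finset.mem_Ico] at hj
      exact mul_mem (mul_mem ⟨(-1)^j, by simp⟩ ⟨((r*n-1).choose (r*j) : ℤ), by simp⟩)
        (ih (n - j) (by omega) (by omega))
  intro n hn
  obtain ⟨m, hm⟩ := main n hn
  exact ⟨m, hm.symm⟩
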